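/- Let G(t) = exp(α(t − 1)) be the generating function of the Poisson(α) law, α > 0. Then t_c := min{t ≥ 0 : 2(G(t) − tG'(t))² = t²G(t)G''(t)} equals (2 − √2)/α, and the inequality (t_c − 2)G(t_c) ≥ t_c(t_c − 1)G'(t_c) holds if and only if α ≤ 3 − 2√2. -/

import Mathlib

/-- For Poisson(α) car arrivals with generating function `G(t) = exp(α(t-1))`,
the point `t_c = min {t ≥ 0 : 2 (G t - t G' t)² = t² G t G'' t}` equals
`(2 - √2)/α`, and the subcriticality inequality
`(t_c - 2) G(t_c) ≥ t_c (t_c - 1) G'(t_c)` holds iff `α ≤ 3 - 2√2`. -/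
theorem stmt8 (α : ℝ) (hα : 0 < α)
    (G G' G'' : ℝ → ℝ)
    (hG : ∀ t, G t = Real.exp (α * (t - 1)))
    (hG' : ∀ t, G' t = α * G t)
    (hG'' : ∀ t, G'' t = α ^ 2 * G t) :
    IsLeast {t : ℝ | 0 ≤ t ∧ 2 * (G t - t * G' t) ^ 2 = t ^ 2 * G t * G'' t}
      ((2 - Real.sqrt 2) / α) ∧
    (((2 - Real.sqrt 2) / α - 2) * G ((2 - Real.sqrt 2) / α)
        ≥ (2 - Real.sqrt 2) / α * ((2 - Real.sqrt 2) / α - 1)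
          * G' ((2 - Real.sqrt 2) / α)
      ↔ α ≤ 3 - 2 * Real.sqrt 2) := by
  have hGpos : ∀ t, 0 < G t := fun t => (hG t) ▸ Real.exp_pos _
  set s := Real.sqrt 2 with hs
  have hs2 : s ^ 2 = 2 := Real.sq_sqrt (by norm_num)
  have hs1 : 1 < s := by nlinarith [Real.sqrt_nonneg 2]
  have hs2' : s < 2 := by nlinarith [Real.sqrt_nonneg 2]
  set t := (2 - s) / α with ht
  have hαt : α * t = 2 - s := by rw [ht]; exact mul_div_cancel₀ (2 - s) hα.ne'
  have ht0 : 0 ≤ t := div_nonneg (by linarith) hα.le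
  constructor
  · constructor
    · refine ⟨ht0, ?_⟩
      rw [hG' t, hG'' t]
      have hg := hGpos t
      have : 2 * (G t - t * (α * G t)) ^ 2 = 2 * (1 - α * t) ^ 2 * (G t) ^ 2 := by
        ring
      rw [this, hαt]
      have : t ^ 2 * G t * (α ^ 2 * G t) = (α * t) ^ 2 * (G t) ^ 2 := by ring
      rw [this, hαt]
      nlinarith
    · rintro x ⟨hx0, hx⟩
      rw [hG' x, hG'' x] at hx
      have hg := hGpos x
      have key : 2 * (1 - α * x) ^ 2 = (α * x) ^ 2 := by
        have h1 : 2 * (1 - α * x) ^ 2 * (G x) ^ 2 = (α * x) ^ 2 * (G x) ^ 2 := by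
          nlinarith [hx]
        have := mul_right_cancel₀ (pow_ne_zero 2 hg.ne') h1
        linarith [this]
      set u := α * x with hu
      have hu0 : 0 ≤ u := mul_nonneg hα.le hx0
      have hprod : (u - (2 - s)) * (u - (2 + s)) = 0 := by nlinarith
      have hge : 2 - s ≤ u := by
        rcases mul_eq_zero.mp hprod with h | h
        · linarith
        · nlinarith [Real.sqrt_nonneg 2]
      rw [ht, div_le_iff₀ hα]
      linarith [hge, mul_comm α x]
  · rw [hG' t]
    have hg := hGpos t
    constructor
    · intro h
      have h2 : t - 2 ≥ t * (t - 1) * α := by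
        have := (mul_le_mul_iff_of_pos_right hg).mp (by linarith [h] : t * (t - 1) * α * G t ≤ (t - 2) * G t)
        linarith
      -- multiply by α : α t - 2 α ≥ (α t)(α t) - (α t) α ... use hαt
      have h3 : α * (t - 2) ≥ α * (t * (t - 1) * α) := by nlinarith
      have h4 : (2 - s) - 2 * α ≥ (2 - s) ^ 2 - (2 - s) * α := by nlinarith [hαt]
      -- (2-s)^2 = 6 - 4s
      have h5 : s * α ≤ 3 * s - 4 := by nlinarith
      have hspos : 0 < s := by linarith
      have : α ≤ (3 * s - 4) / s := by
        rw [le_div_iff₀ hspos]; linarith [h5, mul_comm α s]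
      have heq : (3 * s - 4) / s = 3 - 2 * s := by
        field_simp
        nlinarith
      linarith [heq ▸ this]
    · intro h
      have h5 : s * α ≤ 3 * s - 4 := by nlinarith
      have h4 : (2 - s) - 2 * α ≥ (2 - s) ^ 2 - (2 - s) * α := by nlinarith
      have h2 : t - 2 ≥ t * (t - 1) * α := by
        have hαt2 : α * (α * (t * (t-1))) = (2-s)^2 - (2-s)*α := by
          have : α * (α * (t * (t-1))) = (α*t)*(α*t) - (α*t)*α := by ring
          rw [this, hαt]; ring
        have hαt1 : α * (t - 2) = (2 - s) - 2 * α := by rw [mul_sub, hαt]; ring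
        nlinarith [hαt2, hαt1]
      nlinarith [h2, hg]
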